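/- For each index i, the real function f(t) = ℓ evaluated with the diagonal entry a_i of A replaced by t (keeping all other entries of A, V, μ, ν fixed) is differentiable at t = a_i and its derivative equals (1/2)·Σ_{ii} − ((ν + D)/(2(ν + q)))·r_i², where Σ_{ii} is the (i,i)-entry of Σ = Ω⁻¹ and r_i = y_i − μ_i. -/

import Mathlib

open Matrix

/-- Multivariate t log-likelihood in the low-rank precision parametrization
`Ω = A + V·Vᵀ` with `A = diagonal a`:
`ℓ = log Γ((ν+D)/2) - log Γ(ν/2) - (D/2)·log ν - (D/2)·log π + (1/2)·log(det Ω)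
  - ((ν+D)/2)·log(1 + q/ν)` with `q = (y-μ)ᵀ Ω (y-μ)`. -/
noncomputable def tLRLL (D R : ℕ) (y μ : Fin D → ℝ) (a : Fin D → ℝ)
    (V : Matrix (Fin D) (Fin R) ℝ) (ν : ℝ) : ℝ :=
  Real.log (Real.Gamma ((ν + D) / 2)) - Real.log (Real.Gamma (ν / 2))
    - ((D : ℝ) / 2) * Real.log ν - ((D : ℝ) / 2) * Real.log Real.pi
    + (1 / 2) * Real.log (Matrix.diagonal a + V * V.transpose).det
    - ((ν + D) / 2) *
        Real.log (1 + ((y - μ) ⬝ᵥ (Matrix.diagonal a + V * V.transpose).mulVec (y - μ)) / ν)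

/-- First partial derivative of the low-rank multivariate t log-likelihood with respect
to the diagonal entry `a_i`: it equals `(1/2)·Σ_{ii} - ((ν + D)/(2(ν + q)))·r_i²` where
`Σ = Ω⁻¹`, `r = y - μ` and `q = rᵀ Ω r`. -/
theorem tLR_deriv_a (D R : ℕ) (hD : 1 ≤ D) (y μ : Fin D → ℝ) (ν : ℝ) (hν : 0 < ν)
    (a : Fin D → ℝ) (ha : ∀ k, 0 < a k)
    (V : Matrix (Fin D) (Fin R) ℝ) (i : Fin D) :
    HasDerivAt (fun t : ℝ => tLRLL D R y μ (Function.update a i t) V ν)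
      ((1 / 2) * ((Matrix.diagonal a + V * V.transpose)⁻¹) i i
        - (ν + D) /
            (2 * (ν + (y - μ) ⬝ᵥ (Matrix.diagonal a + V * V.transpose).mulVec (y - μ))) *
            (y i - μ i) ^ 2)
      (a i) := by
  set r : Fin D → ℝ := y - μ with hr
  set Ω : Matrix (Fin D) (Fin D) ℝ := Matrix.diagonal a + V * V.transpose with hΩ
  have hsym : Ωᵀ = Ω := by
    simp [hΩ, transpose_add, transpose_mul, Matrix.mul_assoc]
  have hpd : Ω.PosDef := by
    apply Matrix.PosDef.add_posSemidef
    · exact Matrix.posDef_diagonal_iff.mpr ha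
    · have := Matrix.posSemidef_self_mul_conjTranspose V
      simpa using this
  have hdet : 0 < Ω.det := hpd.det_pos
  have hq0 : 0 ≤ r ⬝ᵥ Ω.mulVec r := by
    have := hpd.posSemidef.dotProduct_mulVec_nonneg r
    simpa using this
  set d₀ : ℝ := Ω.det with hd0
  set q₀ : ℝ := r ⬝ᵥ Ω.mulVec r with hq0def
  set c : ℝ := Ω.adjugate i i with hc
  -- expression of the perturbed matrix as a column update
  have hcol : ∀ t : ℝ, Matrix.diagonal (Function.update a i t) + V * V.transpose
      = Ω.updateCol i (fun k => Ω k i + (t - a i) * (Pi.single i 1 : Fin D → ℝ) k) := by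
    intro t
    ext j k
    simp only [hΩ, Matrix.add_apply, Matrix.diagonal_apply, Matrix.updateCol_apply,
      Pi.single_apply, Function.update_apply]
    split_ifs <;> simp_all <;> ring
  have hdet_t : ∀ t : ℝ, (Matrix.diagonal (Function.update a i t) + V * V.transpose).det
      = d₀ + (t - a i) * c := by
    intro t
    rw [hcol t]
    have : (fun k => Ω k i + (t - a i) * (Pi.single i 1 : Fin D → ℝ) k)
        = (fun k => Ω k i) + (t - a i) • (Pi.single i 1 : Fin D → ℝ) := by
      funext k; simp
    rw [this, Matrix.det_updateCol_add, Matrix.det_updateCol_smul]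
    congr 1
    · rw [show (fun k => Ω k i) = fun k => Ω k i from rfl, Matrix.updateCol_eq_self]
    · rw [hc, Matrix.adjugate_apply]
      congr 1
      -- (Ω.updateCol i (Pi.single i 1)).det = (Ω.updateRow i (Pi.single i 1)).det
      rw [← Matrix.det_transpose (Ω.updateCol i (Pi.single i 1)),
        ← Matrix.updateRow_transpose, hsym]
  have hsingle : r ⬝ᵥ (Matrix.single i i (1:ℝ)).mulVec r = r i * r i := by
    simp [Matrix.mulVec, dotProduct, Matrix.single, ite_and,
      Finset.mul_sum, mul_comm]
  have hq_t : ∀ t : ℝ, r ⬝ᵥ (Matrix.diagonal (Function.update a i t) + V * V.transpose).mulVec r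
      = q₀ + (t - a i) * (r i * r i) := by
    intro t
    have hmat : Matrix.diagonal (Function.update a i t) + V * V.transpose
        = Ω + (t - a i) • Matrix.single i i (1:ℝ) := by
      ext j k
      simp only [hΩ, Matrix.add_apply, Matrix.diagonal_apply, Matrix.smul_apply,
        Matrix.single, Matrix.of_apply, Function.update_apply, smul_eq_mul, ite_and]
      split_ifs <;> subst_vars <;> simp_all <;> try ring
    rw [hmat, Matrix.add_mulVec, dotProduct_add, Matrix.smul_mulVec,
      dotProduct_smul, hsingle]
    simp [hq0def, smul_eq_mul]
  have hri : r i = y i - μ i := by simp [hr]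
  have hd0ne : d₀ ≠ 0 := ne_of_gt hdet
  have hνne : ν ≠ 0 := ne_of_gt hν
  have hνq : 0 < ν + q₀ := by linarith
  have hνqne : ν + q₀ ≠ 0 := ne_of_gt hνq
  -- rewrite the function
  have hfun : (fun t : ℝ => tLRLL D R y μ (Function.update a i t) V ν)
      = fun t => (Real.log (Real.Gamma ((ν + D) / 2)) - Real.log (Real.Gamma (ν / 2))
          - ((D : ℝ) / 2) * Real.log ν - ((D : ℝ) / 2) * Real.log Real.pi)
        + (1 / 2) * Real.log (d₀ + (t - a i) * c)
        - ((ν + D) / 2) * Real.log (1 + (q₀ + (t - a i) * (r i * r i)) / ν) := by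
    funext t
    rw [tLRLL, hdet_t t, ← hr, hq_t t]
  rw [hfun]
  -- derivative of the determinant part
  have h1 : HasDerivAt (fun t : ℝ => d₀ + (t - a i) * c) c (a i) := by
    simpa using (((hasDerivAt_id (a i)).sub_const (a i)).mul_const c).const_add d₀
  have h1v : d₀ + (a i - a i) * c = d₀ := by ring
  have hlog1 : HasDerivAt (fun t : ℝ => Real.log (d₀ + (t - a i) * c)) (c / d₀) (a i) := by
    have := h1.log (by rw [h1v]; exact hd0ne)
    simpa [h1v] using this
  have h2 : HasDerivAt (fun t : ℝ => 1 + (q₀ + (t - a i) * (r i * r i)) / ν)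
      (r i * r i / ν) (a i) := by
    have h := (((hasDerivAt_id (a i)).sub_const (a i)).mul_const (r i * r i)).const_add q₀
    simpa using (h.div_const ν).const_add 1
  have h2v : 1 + (q₀ + (a i - a i) * (r i * r i)) / ν = 1 + q₀ / ν := by ring_nf
  have h2vpos : (0:ℝ) < 1 + q₀ / ν := by positivity
  have hlog2 : HasDerivAt (fun t : ℝ => Real.log (1 + (q₀ + (t - a i) * (r i * r i)) / ν))
      ((r i * r i / ν) / (1 + q₀ / ν)) (a i) := by
    have := h2.log (by rw [h2v]; exact ne_of_gt h2vpos)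
    simpa [h2v] using this
  have hD2 : HasDerivAt (fun t : ℝ =>
      (Real.log (Real.Gamma ((ν + D) / 2)) - Real.log (Real.Gamma (ν / 2))
          - ((D : ℝ) / 2) * Real.log ν - ((D : ℝ) / 2) * Real.log Real.pi)
        + (1 / 2) * Real.log (d₀ + (t - a i) * c)
        - ((ν + D) / 2) * Real.log (1 + (q₀ + (t - a i) * (r i * r i)) / ν))
      ((1 / 2) * (c / d₀) - ((ν + D) / 2) * ((r i * r i / ν) / (1 + q₀ / ν))) (a i) :=
    ((hlog1.const_mul (1/2 : ℝ)).const_add _).sub (hlog2.const_mul ((ν + D) / 2))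
  convert hD2 using 1
  have hinv : Ω⁻¹ i i = c / d₀ := by
    rw [Matrix.inv_def, Ring.inverse_eq_inv']
    simp [hc, hd0, div_eq_inv_mul]
  rw [hinv, ← hri]
  field_simp
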